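/- There is a bijection between LR(λ/μ, ν), the set of Littlewood-Richardson tableaux of skew shape λ/μ and content ν, and H°(μ,ν,λ), the set of hives for GL_n with boundary determined by μ, ν, λ (i.e. h_{0,i} = μ_1+⋯+μ_i, h_{i,n} = Σμ + ν_1+⋯+ν_i, h_{i,i} = λ_1+⋯+λ_i). -/

import Mathlib

open Finset

/-- Interlacing condition IC(1): `t_j^(i+1) ≥ t_j^(i)` for `1 ≤ j ≤ i ≤ n-1`. -/
def IsIC1 (n : ℕ) (t : ℕ → ℕ → ℤ) : Prop :=
  ∀ i j : ℕ, 1 ≤ j → j ≤ i → i + 1 ≤ n → t i j ≤ t (i + 1) j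

/-- Interlacing condition IC(2): `t_j^(i) ≥ t_{j+1}^(i+1)`. -/
def IsIC2 (n : ℕ) (t : ℕ → ℕ → ℤ) : Prop :=
  ∀ i j : ℕ, 1 ≤ j → j ≤ i → i + 1 ≤ n → t (i + 1) (j + 1) ≤ t i j

/-- Rhombus condition RC(1): `h_{a,b} + h_{a-1,b-1} ≥ h_{a-1,b} + h_{a,b-1}` for `1 ≤ a < b ≤ n`. -/
def IsRC1 (n : ℕ) (h : ℕ → ℕ → ℤ) : Prop :=
  ∀ a b : ℕ, 1 ≤ a → a < b → b ≤ n →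
    h (a - 1) b + h a (b - 1) ≤ h a b + h (a - 1) (b - 1)

/-- Rhombus condition RC(2): `h_{a-1,b} + h_{a,b} ≥ h_{a,b+1} + h_{a-1,b-1}` for `1 ≤ a ≤ b < n`. -/
def IsRC2 (n : ℕ) (h : ℕ → ℕ → ℤ) : Prop :=
  ∀ a b : ℕ, 1 ≤ a → a ≤ b → b < n →
    h a (b + 1) + h (a - 1) (b - 1) ≤ h (a - 1) b + h a b

/-- Rhombus condition RC(3): `h_{a,b} + h_{a,b+1} ≥ h_{a+1,b+1} + h_{a-1,b}` for `1 ≤ a ≤ b < n`. -/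
def IsRC3 (n : ℕ) (h : ℕ → ℕ → ℤ) : Prop :=
  ∀ a b : ℕ, 1 ≤ a → a ≤ b → b < n →
    h (a + 1) (b + 1) + h (a - 1) b ≤ h a b + h a (b + 1)

/-- First derived t-array `T1`: `x_{b+1-a}^{(n-a)} = h_{a,b+1} - h_{a,b}`,
so `x_j^(i) = h_{n-i, n-i+j} - h_{n-i, n-i+j-1}`. -/
def dT1 (n : ℕ) (h : ℕ → ℕ → ℤ) (i j : ℕ) : ℤ :=
  h (n - i) (n - i + j) - h (n - i) (n - i + j - 1)

/-- Second derived t-array `T2`: `y_{a+1}^{(b+1)} = h_{a+1,b+1} - h_{a,b+1}`,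
so `y_j^(i) = h_{j,i} - h_{j-1,i}`. -/
def dT2 (h : ℕ → ℕ → ℤ) (i j : ℕ) : ℤ :=
  h j i - h (j - 1) i

/-- Third derived t-array `T3`: `z_{a+1}^{(n+a-b)} = h_{a+1,b+1} - h_{a,b}`,
so `z_j^(i) = h_{j, n+j-i} - h_{j-1, n+j-1-i}`. -/
def dT3 (n : ℕ) (h : ℕ → ℕ → ℤ) (i j : ℕ) : ℤ :=
  h j (n + j - i) - h (j - 1) (n + j - 1 - i)

/-- The dual t-array: `s_j^(i) = -t_{i+1-j}^(i)`. -/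
def dualT (t : ℕ → ℕ → ℤ) (i j : ℕ) : ℤ := - t i (i + 1 - j)

/-- The weight of a t-array: `w_i = Σ_{k=1}^i t_k^(i) - Σ_{k=1}^{i-1} t_k^(i-1)`. -/
def wt (t : ℕ → ℕ → ℤ) (i : ℕ) : ℤ :=
  (∑ k ∈ Finset.Icc 1 i, t i k) - ∑ k ∈ Finset.Icc 1 (i - 1), t (i - 1) k

/-- The Gelfand–Zelevinsky exponent
`ε_j^(i)(T) = Σ_{1 ≤ h < j} (t_h^(i+1) - 2 t_h^(i) + t_h^(i-1)) + (t_j^(i+1) - t_j^(i))`. -/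
def expo (t : ℕ → ℕ → ℤ) (i j : ℕ) : ℤ :=
  (∑ h ∈ Finset.Icc 1 (j - 1), (t (i + 1) h - 2 * t i h + t (i - 1) h)) +
    (t (i + 1) j - t i j)

/-- Boundary conditions for an h-array in `H(μ,ν,λ)`. -/
def IsBoundary (n : ℕ) (mu nu lam : ℕ → ℤ) (h : ℕ → ℕ → ℤ) : Prop :=
  h 0 0 = 0 ∧
  (∀ i, 1 ≤ i → i ≤ n → h 0 i = ∑ k ∈ Finset.Icc 1 i, mu k) ∧
  (∀ i, 1 ≤ i → i ≤ n →
    h i n = (∑ k ∈ Finset.Icc 1 n, mu k) + ∑ k ∈ Finset.Icc 1 i, nu k) ∧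
  (∀ i, 1 ≤ i → i ≤ n → h i i = ∑ k ∈ Finset.Icc 1 i, lam k)

/-- A weakly decreasing sequence of nonnegative integers of length `n`
(a polynomial dominant weight). -/
def IsDomWeight (n : ℕ) (mu : ℕ → ℤ) : Prop :=
  (∀ i, 1 ≤ i → i + 1 ≤ n → mu (i + 1) ≤ mu i) ∧ (∀ i, 1 ≤ i → i ≤ n → 0 ≤ mu i)

/-- `cnt mu lam Y i j` is the number of entries equal to `i` in row `j` of the
filling `Y` of the skew shape `lam/mu` (row `j` occupies columns `mu j + 1, …, lam j`). -/
def cnt (mu lam : ℕ → ℕ) (Y : ℕ → ℕ → ℕ) (i j : ℕ) : ℕ :=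
  ((Finset.Icc (mu j + 1) (lam j)).filter (fun c => Y j c = i)).card

/-- Entries weakly increase from left to right in every row. -/
def RowWeak (n : ℕ) (mu lam : ℕ → ℕ) (Y : ℕ → ℕ → ℕ) : Prop :=
  ∀ j c c' : ℕ, 1 ≤ j → j ≤ n → mu j < c → c ≤ c' → c' ≤ lam j → Y j c ≤ Y j c'

/-- Entries strictly increase from top to bottom in every column. -/
def ColStrict (n : ℕ) (mu lam : ℕ → ℕ) (Y : ℕ → ℕ → ℕ) : Prop :=
  ∀ j c : ℕ, 1 ≤ j → j + 1 ≤ n → mu j < c → c ≤ lam j → mu (j + 1) < c →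
    c ≤ lam (j + 1) → Y j c < Y (j + 1) c

/-- All entries of the filling lie in `{1, …, n}`. -/
def EntriesIn (n : ℕ) (mu lam : ℕ → ℕ) (Y : ℕ → ℕ → ℕ) : Prop :=
  ∀ j c : ℕ, 1 ≤ j → j ≤ n → mu j < c → c ≤ lam j → 1 ≤ Y j c ∧ Y j c ≤ n

/-- The filling has content `nu`: the entry `k` appears `nu k` times. -/
def HasContent (n : ℕ) (mu lam nu : ℕ → ℕ) (Y : ℕ → ℕ → ℕ) : Prop :=
  ∀ k, 1 ≤ k → k ≤ n → (∑ j ∈ Finset.Icc 1 n, cnt mu lam Y k j) = nu k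

/-- The `j`-th row of the filling, read from left to right. -/
def rowWord (mu lam : ℕ → ℕ) (Y : ℕ → ℕ → ℕ) (j : ℕ) : List ℕ :=
  (List.range (lam j - mu j)).map (fun k => Y j (mu j + 1 + k))

/-- The reverse reading word: read the rows left to right, starting from the bottom row. -/
def revReadingWord (n : ℕ) (mu lam : ℕ → ℕ) (Y : ℕ → ℕ → ℕ) : List ℕ :=
  ((List.range n).map (fun r => rowWord mu lam Y (n - r))).flatten

/-- A word `x_1 … x_r` is Yamanouchi (a lattice permutation) if every suffix
contains at least as many `a`'s as `(a+1)`'s, for every `a ≥ 1`. -/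
def IsYamanouchiWord (w : List ℕ) : Prop :=
  ∀ s : List ℕ, s <:+ w → ∀ a : ℕ, 1 ≤ a → s.count (a + 1) ≤ s.count a

/-- A partition with at most `n` parts. -/
def IsPartition (n : ℕ) (lam : ℕ → ℕ) : Prop :=
  (∀ i, 1 ≤ i → lam (i + 1) ≤ lam i) ∧ ∀ i, n < i → lam i = 0

/-- Normalisation: the filling vanishes outside the boxes of the skew shape `lam/mu`. -/
def NormFilling (n : ℕ) (mu lam : ℕ → ℕ) (Y : ℕ → ℕ → ℕ) : Prop :=
  ∀ j c, ¬(1 ≤ j ∧ j ≤ n ∧ mu j < c ∧ c ≤ lam j) → Y j c = 0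

/-- A Littlewood–Richardson tableau of shape `lam/mu` and content `nu`:
a semistandard skew tableau with entries in `{1,…,n}` whose reverse reading
word is Yamanouchi. -/
def IsLR (n : ℕ) (mu lam nu : ℕ → ℕ) (Y : ℕ → ℕ → ℕ) : Prop :=
  RowWeak n mu lam Y ∧ ColStrict n mu lam Y ∧ EntriesIn n mu lam Y ∧
    IsYamanouchiWord (revReadingWord n mu lam Y) ∧ HasContent n mu lam nu Y
/-! ### Generic auxiliary lemmas -/

lemma LRH_tele (f : ℕ → ℤ) (a : ℕ) : ∑ i ∈ Icc 1 a, (f i - f (i-1)) = f a - f 0 := by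
  induction a with
  | zero => simp
  | succ a ih => rw [Finset.sum_Icc_succ_top (by omega)]; simp [ih]

lemma LRH_prefix_eq_Icc {S : Finset ℕ} {m L : ℕ} (hS : S ⊆ Icc (m+1) L)
    (hpref : ∀ c ∈ S, ∀ c', m < c' → c' ≤ c → c' ∈ S) :
    S = Icc (m+1) (m + S.card) := by
  rcases S.eq_empty_or_nonempty with he | hne
  · simp [he]
  · have hmax := S.max'_mem hne
    have hSeq : S = Icc (m+1) (S.max' hne) := by
      apply Finset.Subset.antisymm
      · intro c hc
        have := hS hc
        simp only [Finset.mem_Icc] at this ⊢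
        exact ⟨this.1, S.le_max' c hc⟩
      · intro c hc
        simp only [Finset.mem_Icc] at hc
        exact hpref _ hmax c (by omega) hc.2
    have hm : m + 1 ≤ S.max' hne := by
      have := hS hmax; simp only [Finset.mem_Icc] at this; omega
    have hcard : S.card = S.max' hne - m := by
      conv_lhs => rw [hSeq]
      rw [Nat.card_Icc]; omega
    rw [hcard]
    conv_lhs => rw [hSeq]
    congr 1; omega

lemma LRH_count_map_range (f : ℕ → ℕ) (a m : ℕ) :
    ((List.range m).map f).count a = ((Finset.range m).filter (fun k => f k = a)).card := by
  induction m with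
  | zero => simp
  | succ m ih =>
    rw [List.range_succ, List.map_append, List.count_append, Finset.range_add_one,
      Finset.filter_insert]
    by_cases h : f m = a
    · rw [if_pos h, Finset.card_insert_of_notMem (by simp)]
      simp [h, ih, List.count_singleton]
    · rw [if_neg h]
      simp only [List.map_cons, List.map_nil, ih]
      rw [List.count_singleton']
      simp [h]

lemma LRH_suffix_append_decomp {s A B : List ℕ} (h : s <:+ (A ++ B)) :
    s <:+ B ∨ ∃ s1, s1 <:+ A ∧ s = s1 ++ B := by
  obtain ⟨t, ht⟩ := h
  rw [List.append_eq_append_iff] at ht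
  rcases ht with ⟨a', h1, h2⟩ | ⟨c', h1, h2⟩
  · exact Or.inr ⟨a', ⟨t, h1.symm⟩, h2⟩
  · exact Or.inl ⟨c', h2.symm⟩

lemma LRH_suffix_append_left {s A : List ℕ} (B : List ℕ) (h : s <:+ A) :
    s ++ B <:+ A ++ B := by
  obtain ⟨t, ht⟩ := h
  exact ⟨t, by rw [← List.append_assoc, ht]⟩
/-! ### Tableau-side lemmas -/

lemma LRH_cnt_eq_count (mu lam : ℕ → ℕ) (Y : ℕ → ℕ → ℕ) (i j : ℕ) :
    (rowWord mu lam Y j).count i = cnt mu lam Y i j := by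
  rw [rowWord, LRH_count_map_range, cnt]
  apply Finset.card_bij (fun k _ => mu j + 1 + k)
  · intro k hk
    simp only [Finset.mem_filter, Finset.mem_range] at hk
    simp only [Finset.mem_filter, Finset.mem_Icc]
    exact ⟨⟨by omega, by omega⟩, hk.2⟩
  · intro k1 h1 k2 h2 he; omega
  · intro c hc
    simp only [Finset.mem_filter, Finset.mem_Icc] at hc
    refine ⟨c - (mu j + 1), ?_, by omega⟩
    simp only [Finset.mem_filter, Finset.mem_range]
    refine ⟨by omega, ?_⟩
    have h5 : mu j + 1 + (c - (mu j + 1)) = c := by omega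
    rw [h5]; exact hc.2

def LRH_auxW (mu lam : ℕ → ℕ) (Y : ℕ → ℕ → ℕ) (j : ℕ) : List ℕ :=
  ((List.range j).map (fun r => rowWord mu lam Y (j - r))).flatten

lemma LRH_auxW_zero (mu lam : ℕ → ℕ) (Y : ℕ → ℕ → ℕ) : LRH_auxW mu lam Y 0 = [] := by
  simp [LRH_auxW]

lemma LRH_auxW_succ (mu lam : ℕ → ℕ) (Y : ℕ → ℕ → ℕ) (j : ℕ) :
    LRH_auxW mu lam Y (j+1) = rowWord mu lam Y (j+1) ++ LRH_auxW mu lam Y j := by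
  rw [LRH_auxW, List.range_succ_eq_map, List.map_cons, List.flatten_cons, List.map_map]
  have h1 : j + 1 - 0 = j + 1 := rfl
  rw [h1, LRH_auxW]
  congr 1
  congr 1
  apply List.map_congr_left
  intro r _
  simp only [Function.comp_apply]
  congr 1
  omega

lemma LRH_revWord_eq (n : ℕ) (mu lam : ℕ → ℕ) (Y : ℕ → ℕ → ℕ) :
    revReadingWord n mu lam Y = LRH_auxW mu lam Y n := rfl

lemma LRH_count_auxW (mu lam : ℕ → ℕ) (Y : ℕ → ℕ → ℕ) (a : ℕ) :
    ∀ j, (LRH_auxW mu lam Y j).count a = ∑ j' ∈ Icc 1 j, cnt mu lam Y a j'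
  | 0 => by simp [LRH_auxW_zero]
  | j+1 => by
    rw [LRH_auxW_succ, List.count_append, LRH_cnt_eq_count, LRH_count_auxW mu lam Y a j,
      Finset.sum_Icc_succ_top (by omega : 1 ≤ j+1)]
    omega

lemma LRH_auxW_mono (mu lam : ℕ → ℕ) (Y : ℕ → ℕ → ℕ) {m m' : ℕ} (h : m ≤ m') :
    LRH_auxW mu lam Y m <:+ LRH_auxW mu lam Y m' := by
  induction m' with
  | zero =>
    have h0 : m = 0 := by omega
    subst h0; exact List.suffix_refl _
  | succ m' ih =>
    rcases Nat.eq_or_lt_of_le h with rfl | hlt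
    · exact List.suffix_refl _
    · have h2 := ih (by omega)
      rw [LRH_auxW_succ]
      exact h2.trans (List.suffix_append _ _)

lemma LRH_suffix_auxW (mu lam : ℕ → ℕ) (Y : ℕ → ℕ → ℕ) :
    ∀ j (s : List ℕ), s <:+ LRH_auxW mu lam Y j →
    s = [] ∨ ∃ j' s1, 1 ≤ j' ∧ j' ≤ j ∧ s1 <:+ rowWord mu lam Y j' ∧
      s = s1 ++ LRH_auxW mu lam Y (j'-1)
  | 0, s, hs => by
    left
    rw [LRH_auxW_zero] at hs
    exact List.suffix_nil.mp hs
  | j+1, s, hs => by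
    rw [LRH_auxW_succ] at hs
    rcases LRH_suffix_append_decomp hs with h | ⟨s1, h1, h2⟩
    · rcases LRH_suffix_auxW mu lam Y j s h with h' | ⟨j', s1, ha, hb, hc, hd⟩
      · left; exact h'
      · right; exact ⟨j', s1, ha, by omega, hc, hd⟩
    · right
      refine ⟨j+1, s1, by omega, le_refl _, h1, ?_⟩
      simpa using h2

lemma LRH_strong_zero (n : ℕ) (mu lam : ℕ → ℕ) (Y : ℕ → ℕ → ℕ)
    (hstrong : ∀ a b, 1 ≤ a → b + 1 ≤ n →
      (∑ j ∈ Icc 1 (b+1), cnt mu lam Y (a+1) j) ≤ ∑ j ∈ Icc 1 b, cnt mu lam Y a j) :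
    ∀ i b, b < i → b ≤ n → (∑ j ∈ Icc 1 b, cnt mu lam Y i j) = 0 := by
  intro i
  induction i with
  | zero => intro b hb hbn; omega
  | succ i ih =>
    intro b hb hbn
    rcases Nat.eq_zero_or_pos b with rfl | hbpos
    · simp
    · have h1 := hstrong i (b-1) (by omega) (by omega)
      have h2 := ih (b-1) (by omega) (by omega)
      have hb1 : b - 1 + 1 = b := by omega
      rw [hb1] at h1
      omega

lemma LRH_cnt_zero (n : ℕ) (mu lam : ℕ → ℕ) (Y : ℕ → ℕ → ℕ)
    (hstrong : ∀ a b, 1 ≤ a → b + 1 ≤ n →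
      (∑ j ∈ Icc 1 (b+1), cnt mu lam Y (a+1) j) ≤ ∑ j ∈ Icc 1 b, cnt mu lam Y a j)
    {i j : ℕ} (hji : j < i) (hj1 : 1 ≤ j) (hjn : j ≤ n) : cnt mu lam Y i j = 0 := by
  have h1 := LRH_strong_zero n mu lam Y hstrong i j hji hjn
  have h2 : cnt mu lam Y i j ≤ ∑ j' ∈ Icc 1 j, cnt mu lam Y i j' :=
    Finset.single_le_sum (f := fun j' => cnt mu lam Y i j') (fun _ _ => Nat.zero_le _)
      (Finset.mem_Icc.mpr ⟨hj1, le_refl _⟩)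
  omega
lemma LRH_yam_strong (n : ℕ) (mu lam : ℕ → ℕ) (Y : ℕ → ℕ → ℕ)
    (hrow : RowWeak n mu lam Y)
    (hyam : IsYamanouchiWord (revReadingWord n mu lam Y)) :
    ∀ a b, 1 ≤ a → b + 1 ≤ n →
      (∑ j ∈ Icc 1 (b+1), cnt mu lam Y (a+1) j) ≤ ∑ j ∈ Icc 1 b, cnt mu lam Y a j := by
  intro a b
  induction b using Nat.strong_induction_on with
  | _ b IH =>
  intro ha hbn
  by_cases hc : cnt mu lam Y (a+1) (b+1) = 0
  · rw [Finset.sum_Icc_succ_top (by omega : 1 ≤ b+1), hc, add_zero]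
    rcases Nat.eq_zero_or_pos b with rfl | hbpos
    · simp
    · have h1 := IH (b-1) (by omega) ha (by omega)
      have hb1 : b - 1 + 1 = b := by omega
      rw [hb1] at h1
      refine h1.trans (Finset.sum_le_sum_of_subset ?_)
      exact Finset.Icc_subset_Icc_right (by omega)
  · have hFne : ((Finset.Icc (mu (b+1) + 1) (lam (b+1))).filter
        (fun c => Y (b+1) c = a + 1)).Nonempty := by
      rw [← Finset.card_pos]
      have h5 : ((Finset.Icc (mu (b+1) + 1) (lam (b+1))).filter
        (fun c => Y (b+1) c = a + 1)).card = cnt mu lam Y (a+1) (b+1) := rfl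
      omega
    set F := (Finset.Icc (mu (b+1) + 1) (lam (b+1))).filter (fun c => Y (b+1) c = a + 1)
      with hF
    have hcol0F : F.min' hFne ∈ F := F.min'_mem hFne
    set col0 := F.min' hFne with hcol0
    have hcol0' : mu (b+1) < col0 ∧ col0 ≤ lam (b+1) ∧ Y (b+1) col0 = a + 1 := by
      rw [hF] at hcol0F
      simp only [Finset.mem_filter, Finset.mem_Icc] at hcol0F
      exact ⟨by omega, hcol0F.1.2, hcol0F.2⟩
    set d := col0 - mu (b+1) - 1 with hd
    have hdlen : d < lam (b+1) - mu (b+1) := by omega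
    set s1 := (rowWord mu lam Y (b+1)).drop d with hs1
    have hrowlen : (rowWord mu lam Y (b+1)).length = lam (b+1) - mu (b+1) := by
      rw [rowWord]; simp
    have hsuf : s1 ++ LRH_auxW mu lam Y b <:+ revReadingWord n mu lam Y := by
      have h1 : s1 ++ LRH_auxW mu lam Y b <:+ LRH_auxW mu lam Y (b+1) := by
        rw [LRH_auxW_succ]
        exact LRH_suffix_append_left _ (List.drop_suffix d _)
      rw [LRH_revWord_eq]
      exact h1.trans (LRH_auxW_mono mu lam Y hbn)
    -- count of a+1 in the take part is zero
    have htake : ((rowWord mu lam Y (b+1)).take d).count (a+1) = 0 := by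
      have h6 : (rowWord mu lam Y (b+1)).take d
          = ((List.range d).map (fun k => Y (b+1) (mu (b+1) + 1 + k))) := by
        rw [rowWord, ← List.map_take, List.take_range, Nat.min_eq_left (le_of_lt hdlen)]
      rw [h6, List.count_eq_zero]
      intro hmem
      simp only [List.mem_map, List.mem_range] at hmem
      obtain ⟨k, hk, hYk⟩ := hmem
      have h7 : mu (b+1) + 1 + k ∈ F := by
        rw [hF]; simp only [Finset.mem_filter, Finset.mem_Icc]
        exact ⟨⟨by omega, by omega⟩, hYk⟩
      have h8 := F.min'_le _ h7
      omega
    -- count of a in s1 is zero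
    have hdropa : s1.count a = 0 := by
      rw [List.count_eq_zero]
      intro hmem
      rw [List.mem_iff_getElem] at hmem
      obtain ⟨p, hp, hget⟩ := hmem
      have hps : p < (rowWord mu lam Y (b+1)).length - d := by
        rw [hs1, List.length_drop] at hp; exact hp
      have hlt : d + p < (rowWord mu lam Y (b+1)).length := by omega
      have h9 : (rowWord mu lam Y (b+1))[d+p]'hlt = a := by
        rw [List.getElem_drop']
        exact hget
      have h10 : Y (b+1) (mu (b+1) + 1 + (d + p)) = a := by
        simp only [rowWord, List.getElem_map, List.getElem_range] at h9
        exact h9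
      have h11 := hrow (b+1) col0 (mu (b+1) + 1 + (d + p)) (by omega) hbn
        (by omega) (by omega) (by rw [hrowlen] at hlt; omega)
      omega
    have hcnt1 : s1.count (a+1) = cnt mu lam Y (a+1) (b+1) := by
      have h12 := List.take_append_drop d (rowWord mu lam Y (b+1))
      have h13 : (rowWord mu lam Y (b+1)).count (a+1)
          = ((rowWord mu lam Y (b+1)).take d).count (a+1) + s1.count (a+1) := by
        conv_lhs => rw [← h12]
        rw [List.count_append]
      rw [LRH_cnt_eq_count] at h13
      omega
    have hyam1 := hyam _ hsuf a ha
    rw [List.count_append, List.count_append, LRH_count_auxW, LRH_count_auxW,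
      hcnt1, hdropa] at hyam1
    rw [Finset.sum_Icc_succ_top (by omega : 1 ≤ b+1)]
    omega

lemma LRH_strong_yam (n : ℕ) (mu lam : ℕ → ℕ) (Y : ℕ → ℕ → ℕ)
    (hstrong : ∀ a b, 1 ≤ a → b + 1 ≤ n →
      (∑ j ∈ Icc 1 (b+1), cnt mu lam Y (a+1) j) ≤ ∑ j ∈ Icc 1 b, cnt mu lam Y a j) :
    IsYamanouchiWord (revReadingWord n mu lam Y) := by
  intro s hs a ha
  rw [LRH_revWord_eq] at hs
  rcases LRH_suffix_auxW mu lam Y n s hs with rfl | ⟨j', s1, hj1, hjn, hsuf, rfl⟩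
  · simp
  · rw [List.count_append, List.count_append, LRH_count_auxW, LRH_count_auxW]
    have h1 : s1.count (a+1) ≤ cnt mu lam Y (a+1) j' := by
      rw [← LRH_cnt_eq_count]
      exact hsuf.sublist.count_le _
    have h2 := hstrong a (j'-1) ha (by omega)
    have hj1' : j' - 1 + 1 = j' := by omega
    rw [hj1'] at h2
    have h3 : (∑ j ∈ Icc 1 j', cnt mu lam Y (a+1) j)
        = (∑ j ∈ Icc 1 (j'-1), cnt mu lam Y (a+1) j) + cnt mu lam Y (a+1) j' := by
      conv_lhs => rw [← hj1']
      rw [Finset.sum_Icc_succ_top (by omega : 1 ≤ j'-1+1), hj1']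
    omega
def LRH_rcard (mu lam : ℕ → ℕ) (Y : ℕ → ℕ → ℕ) (a j : ℕ) : ℕ :=
  ((Finset.Icc (mu j + 1) (lam j)).filter (fun c => 1 ≤ Y j c ∧ Y j c ≤ a)).card

lemma LRH_R_eq_rcard (mu lam : ℕ → ℕ) (Y : ℕ → ℕ → ℕ) (j : ℕ) :
    ∀ a, (∑ i ∈ Icc 1 a, cnt mu lam Y i j) = LRH_rcard mu lam Y a j
  | 0 => by
    rw [LRH_rcard]
    simp only [Finset.Icc_self, Icc_eq_empty_of_lt (by omega : (1:ℕ) > 0)]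
    rw [Finset.sum_empty]
    symm
    rw [Finset.card_eq_zero, Finset.filter_eq_empty_iff]
    intro c _
    omega
  | a+1 => by
    rw [Finset.sum_Icc_succ_top (by omega : 1 ≤ a+1), LRH_R_eq_rcard mu lam Y j a]
    have hsplit : (Finset.Icc (mu j + 1) (lam j)).filter (fun c => 1 ≤ Y j c ∧ Y j c ≤ a+1)
        = ((Finset.Icc (mu j + 1) (lam j)).filter (fun c => 1 ≤ Y j c ∧ Y j c ≤ a))
          ∪ ((Finset.Icc (mu j + 1) (lam j)).filter (fun c => Y j c = a+1)) := by
      rw [← Finset.filter_or]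
      apply Finset.filter_congr
      intro c _
      constructor
      · intro h; omega
      · intro h; omega
    have hdisj : Disjoint
        ((Finset.Icc (mu j + 1) (lam j)).filter (fun c => 1 ≤ Y j c ∧ Y j c ≤ a))
        ((Finset.Icc (mu j + 1) (lam j)).filter (fun c => Y j c = a+1)) := by
      rw [Finset.disjoint_left]
      intro c h1 h2
      simp only [Finset.mem_filter] at h1 h2
      omega
    have hr : LRH_rcard mu lam Y (a+1) j
        = ((Finset.Icc (mu j + 1) (lam j)).filter (fun c => 1 ≤ Y j c ∧ Y j c ≤ a+1)).card := rfl
    rw [hr, hsplit, Finset.card_union_of_disjoint hdisj]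
    rfl

lemma LRH_rcard_total (n : ℕ) (mu lam : ℕ → ℕ) (Y : ℕ → ℕ → ℕ)
    (hent : EntriesIn n mu lam Y) {j : ℕ} (hj1 : 1 ≤ j) (hjn : j ≤ n) :
    LRH_rcard mu lam Y n j = lam j - mu j := by
  have h1 : ∀ c ∈ Finset.Icc (mu j + 1) (lam j), 1 ≤ Y j c ∧ Y j c ≤ n := by
    intro c hc; rw [Finset.mem_Icc] at hc; exact hent j c hj1 hjn (by omega) hc.2
  rw [LRH_rcard, Finset.filter_true_of_mem h1, Nat.card_Icc]
  omega

lemma LRH_rcard_mono (mu lam : ℕ → ℕ) (Y : ℕ → ℕ → ℕ) (j : ℕ) {a a' : ℕ} (h : a ≤ a') :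
    LRH_rcard mu lam Y a j ≤ LRH_rcard mu lam Y a' j := by
  apply Finset.card_le_card
  intro c hc
  simp only [Finset.mem_filter] at hc ⊢
  exact ⟨hc.1, hc.2.1, by omega⟩

lemma LRH_ssyt_ineq (n : ℕ) (mu lam : ℕ → ℕ) (Y : ℕ → ℕ → ℕ)
    (hlam1 : ∀ i, 1 ≤ i → lam (i+1) ≤ lam i) (hmu1 : ∀ i, 1 ≤ i → mu (i+1) ≤ mu i)
    (hrow : RowWeak n mu lam Y) (hcol : ColStrict n mu lam Y) (hent : EntriesIn n mu lam Y)
    {a b : ℕ} (ha : 1 ≤ a) (hb : 1 ≤ b) (hbn : b + 1 ≤ n) :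
    mu (b+1) + LRH_rcard mu lam Y a (b+1) ≤ mu b + LRH_rcard mu lam Y (a-1) b := by
  set S := (Finset.Icc (mu (b+1) + 1) (lam (b+1))).filter
    (fun c => 1 ≤ Y (b+1) c ∧ Y (b+1) c ≤ a) with hS
  have hSsub : S ⊆ Finset.Icc (mu (b+1)+1) (lam (b+1)) := Finset.filter_subset _ _
  have hpref : ∀ c ∈ S, ∀ c', mu (b+1) < c' → c' ≤ c → c' ∈ S := by
    intro c hc c' h1 h2
    rw [hS, Finset.mem_filter, Finset.mem_Icc] at hc ⊢
    have h3 := hrow (b+1) c' c (by omega) hbn h1 h2 hc.1.2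
    have h4 := hent (b+1) c' (by omega) hbn h1 (by omega)
    exact ⟨⟨by omega, by omega⟩, h4.1, by omega⟩
  have hSeq := LRH_prefix_eq_Icc hSsub hpref
  have hcard : S.card = LRH_rcard mu lam Y a (b+1) := rfl
  by_cases hle : mu (b+1) + S.card ≤ mu b
  · have := Nat.zero_le (LRH_rcard mu lam Y (a-1) b)
    omega
  · have hsub2 : Finset.Icc (mu b + 1) (mu (b+1) + S.card)
        ⊆ (Finset.Icc (mu b + 1) (lam b)).filter (fun c => 1 ≤ Y b c ∧ Y b c ≤ a - 1) := by
      intro c hc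
      rw [Finset.mem_Icc] at hc
      have hcS : c ∈ S := by
        rw [hSeq, Finset.mem_Icc]
        have := hmu1 b hb
        omega
      rw [hS, Finset.mem_filter, Finset.mem_Icc] at hcS
      have hclam : c ≤ lam (b+1) := hcS.1.2
      have hclamb : c ≤ lam b := le_trans hclam (hlam1 b hb)
      have h5 := hcol b c hb hbn (by omega) hclamb (by omega) hclam
      have h6 := hent b c hb (by omega) (by omega) hclamb
      rw [Finset.mem_filter, Finset.mem_Icc]
      exact ⟨⟨hc.1, hclamb⟩, h6.1, by omega⟩
    have hcard2 := Finset.card_le_card hsub2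
    rw [Nat.card_Icc] at hcard2
    have : LRH_rcard mu lam Y (a-1) b
        = ((Finset.Icc (mu b + 1) (lam b)).filter (fun c => 1 ≤ Y b c ∧ Y b c ≤ a - 1)).card := rfl
    omega
/-! ### The forward map: tableau to hive -/

def LRH_M (mu : ℕ → ℕ) (b : ℕ) : ℤ := ∑ k ∈ Icc 1 b, (mu k : ℤ)

def LRH_N (mu lam : ℕ → ℕ) (Y : ℕ → ℕ → ℕ) (a b : ℕ) : ℤ :=
  ∑ j ∈ Icc 1 b, ∑ i ∈ Icc 1 a, (cnt mu lam Y i j : ℤ)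

def LRH_fwd (n : ℕ) (mu lam : ℕ → ℕ) (Y : ℕ → ℕ → ℕ) (a b : ℕ) : ℤ :=
  if a ≤ b ∧ b ≤ n then LRH_M mu b + LRH_N mu lam Y a b else 0

lemma LRH_M_succ (mu : ℕ → ℕ) {b : ℕ} (hb : 1 ≤ b) :
    LRH_M mu b = LRH_M mu (b-1) + (mu b : ℤ) := by
  obtain ⟨b', rfl⟩ : ∃ b', b = b'+1 := ⟨b-1, by omega⟩
  rw [LRH_M, Finset.sum_Icc_succ_top (by omega : 1 ≤ b'+1)]
  simp [LRH_M]

lemma LRH_N_succ_b (mu lam : ℕ → ℕ) (Y : ℕ → ℕ → ℕ) {a b : ℕ} (hb : 1 ≤ b) :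
    LRH_N mu lam Y a b
      = LRH_N mu lam Y a (b-1) + ∑ i ∈ Icc 1 a, (cnt mu lam Y i b : ℤ) := by
  obtain ⟨b', rfl⟩ : ∃ b', b = b'+1 := ⟨b-1, by omega⟩
  rw [LRH_N, Finset.sum_Icc_succ_top (by omega : 1 ≤ b'+1)]
  simp [LRH_N]

lemma LRH_N_succ_a (mu lam : ℕ → ℕ) (Y : ℕ → ℕ → ℕ) {a : ℕ} (b : ℕ) (ha : 1 ≤ a) :
    LRH_N mu lam Y a b
      = LRH_N mu lam Y (a-1) b + ∑ j ∈ Icc 1 b, (cnt mu lam Y a j : ℤ) := by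
  rw [LRH_N, LRH_N, ← Finset.sum_add_distrib]
  apply Finset.sum_congr rfl
  intro j _
  obtain ⟨a', rfl⟩ : ∃ a', a = a'+1 := ⟨a-1, by omega⟩
  rw [Finset.sum_Icc_succ_top (by omega : 1 ≤ a'+1)]
  simp

lemma LRH_fwd_mem (n : ℕ) (lam mu nu : ℕ → ℕ)
    (hlam : IsPartition n lam) (hmu : IsPartition n mu) (hsub : ∀ j, mu j ≤ lam j)
    (Y : ℕ → ℕ → ℕ) (hY : IsLR n mu lam nu Y) :
    IsRC1 n (LRH_fwd n mu lam Y) ∧ IsRC2 n (LRH_fwd n mu lam Y) ∧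
    IsRC3 n (LRH_fwd n mu lam Y) ∧
    IsBoundary n (fun i => (mu i : ℤ)) (fun i => (nu i : ℤ)) (fun i => (lam i : ℤ))
      (LRH_fwd n mu lam Y) ∧
    ∀ a b, ¬(a ≤ b ∧ b ≤ n) → LRH_fwd n mu lam Y a b = 0 := by
  obtain ⟨hrow, hcol, hent, hyam, hcont⟩ := hY
  have hstrong := LRH_yam_strong n mu lam Y hrow hyam
  have hfwd_in : ∀ a b, a ≤ b → b ≤ n →
      LRH_fwd n mu lam Y a b = LRH_M mu b + LRH_N mu lam Y a b := by
    intro a b h1 h2; rw [LRH_fwd, if_pos ⟨h1, h2⟩]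
  refine ⟨?_, ?_, ?_, ⟨?_, ?_, ?_, ?_⟩, ?_⟩
  · -- RC1
    intro a b ha hab hbn
    rw [hfwd_in a b (by omega) hbn, hfwd_in (a-1) b (by omega) hbn,
      hfwd_in a (b-1) (by omega) (by omega), hfwd_in (a-1) (b-1) (by omega) (by omega)]
    have h1 := LRH_N_succ_a mu lam Y b ha
    have h2 := LRH_N_succ_a mu lam Y (b-1) ha
    have h3 : (∑ j ∈ Icc 1 (b-1), (cnt mu lam Y a j : ℤ))
        ≤ ∑ j ∈ Icc 1 b, (cnt mu lam Y a j : ℤ) := by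
      apply Finset.sum_le_sum_of_subset_of_nonneg (Finset.Icc_subset_Icc_right (by omega))
      intro i _ _; positivity
    linarith
  · -- RC2
    intro a b ha hab hbn
    rw [hfwd_in a (b+1) (by omega) (by omega), hfwd_in (a-1) (b-1) (by omega) (by omega),
      hfwd_in (a-1) b (by omega) (by omega), hfwd_in a b hab (by omega)]
    have hM1 : LRH_M mu (b+1) = LRH_M mu b + (mu (b+1) : ℤ) := by
      have := LRH_M_succ mu (b := b+1) (by omega); simpa using this
    have hM2 : LRH_M mu b = LRH_M mu (b-1) + (mu b : ℤ) := LRH_M_succ mu (by omega)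
    have hN1 : LRH_N mu lam Y a (b+1)
        = LRH_N mu lam Y a b + ∑ i ∈ Icc 1 a, (cnt mu lam Y i (b+1) : ℤ) := by
      have := LRH_N_succ_b mu lam Y (a := a) (b := b+1) (by omega); simpa using this
    have hN2 : LRH_N mu lam Y (a-1) b
        = LRH_N mu lam Y (a-1) (b-1) + ∑ i ∈ Icc 1 (a-1), (cnt mu lam Y i b : ℤ) :=
      LRH_N_succ_b mu lam Y (by omega)
    have hkey : (mu (b+1) : ℤ) + ∑ i ∈ Icc 1 a, (cnt mu lam Y i (b+1) : ℤ)
        ≤ (mu b : ℤ) + ∑ i ∈ Icc 1 (a-1), (cnt mu lam Y i b : ℤ) := by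
      rw [← Nat.cast_sum, ← Nat.cast_sum, LRH_R_eq_rcard, LRH_R_eq_rcard]
      exact_mod_cast LRH_ssyt_ineq n mu lam Y hlam.1 hmu.1 hrow hcol hent ha (by omega)
        (by omega)
    linarith
  · -- RC3
    intro a b ha hab hbn
    rw [hfwd_in (a+1) (b+1) (by omega) (by omega), hfwd_in (a-1) b (by omega) (by omega),
      hfwd_in a b hab (by omega), hfwd_in a (b+1) (by omega) (by omega)]
    have hN1 : LRH_N mu lam Y (a+1) (b+1)
        = LRH_N mu lam Y a (b+1) + ∑ j ∈ Icc 1 (b+1), (cnt mu lam Y (a+1) j : ℤ) := by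
      have := LRH_N_succ_a mu lam Y (b+1) (a := a+1) (by omega); simpa using this
    have hN2 : LRH_N mu lam Y a b
        = LRH_N mu lam Y (a-1) b + ∑ j ∈ Icc 1 b, (cnt mu lam Y a j : ℤ) :=
      LRH_N_succ_a mu lam Y b ha
    have hkey : (∑ j ∈ Icc 1 (b+1), (cnt mu lam Y (a+1) j : ℤ))
        ≤ ∑ j ∈ Icc 1 b, (cnt mu lam Y a j : ℤ) := by
      rw [← Nat.cast_sum, ← Nat.cast_sum]
      exact_mod_cast hstrong a b ha (by omega)
    linarith
  · -- h 0 0 = 0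
    rw [hfwd_in 0 0 (le_refl _) (Nat.zero_le _)]
    simp [LRH_M, LRH_N]
  · -- h 0 i = M i
    intro i h1 h2
    rw [hfwd_in 0 i (by omega) h2]
    have h3 : LRH_N mu lam Y 0 i = 0 := by
      rw [LRH_N]; apply Finset.sum_eq_zero; intro j _; simp
    rw [h3, add_zero]; rfl
  · -- h i n = M n + Nu i
    intro i h1 h2
    rw [hfwd_in i n h2 (le_refl _)]
    have h3 : LRH_N mu lam Y i n = ∑ k ∈ Icc 1 i, (nu k : ℤ) := by
      rw [LRH_N, Finset.sum_comm]
      apply Finset.sum_congr rfl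
      intro k hk
      rw [Finset.mem_Icc] at hk
      rw [← Nat.cast_sum, hcont k hk.1 (le_trans hk.2 h2)]
    rw [h3]; rfl
  · -- h i i = Lam i
    intro i h1 h2
    rw [hfwd_in i i (le_refl _) h2]
    have hNii : LRH_N mu lam Y i i = ∑ j ∈ Icc 1 i, ((lam j : ℤ) - (mu j : ℤ)) := by
      rw [LRH_N]
      apply Finset.sum_congr rfl
      intro j hj
      rw [Finset.mem_Icc] at hj
      have hext : (∑ i' ∈ Icc 1 i, cnt mu lam Y i' j) = ∑ i' ∈ Icc 1 n, cnt mu lam Y i' j := by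
        apply Finset.sum_subset (Finset.Icc_subset_Icc_right h2)
        intro x hx hxn
        rw [Finset.mem_Icc] at hx hxn
        exact LRH_cnt_zero n mu lam Y hstrong (by omega) hj.1 (le_trans hj.2 h2)
      have h7 : (∑ i' ∈ Icc 1 n, cnt mu lam Y i' j) = lam j - mu j := by
        rw [LRH_R_eq_rcard, LRH_rcard_total n mu lam Y hent hj.1 (le_trans hj.2 h2)]
      rw [← Nat.cast_sum, hext, h7, Nat.cast_sub (hsub j)]
    rw [hNii, LRH_M, Finset.sum_sub_distrib]
    ring
  · -- normalisation
    intro a b h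
    rw [LRH_fwd, if_neg h]
/-! ### The backward map: hive to tableau -/

def LRH_rho (mu : ℕ → ℕ) (h : ℕ → ℕ → ℤ) (a j : ℕ) : ℤ :=
  h (min a j) j - h (min a (j-1)) (j-1) - (mu j : ℤ)

noncomputable def LRH_bwd (n : ℕ) (mu lam : ℕ → ℕ) (h : ℕ → ℕ → ℤ) (j col : ℕ) : ℕ :=
  if 1 ≤ j ∧ j ≤ n ∧ mu j < col ∧ col ≤ lam j then
    sInf {a : ℕ | (col : ℤ) ≤ (mu j : ℤ) + LRH_rho mu h a j} else 0

section LRHbwd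

variable {n : ℕ} {lam mu nu : ℕ → ℕ} {h : ℕ → ℕ → ℤ}

lemma LRH_hM (hbd : IsBoundary n (fun i => (mu i : ℤ)) (fun i => (nu i : ℤ))
      (fun i => (lam i : ℤ)) h) :
    ∀ m, m ≤ n → h 0 m = LRH_M mu m := by
  intro m hm
  rcases Nat.eq_zero_or_pos m with rfl | hpos
  · rw [hbd.1]; simp [LRH_M]
  · rw [hbd.2.1 m hpos hm]; rfl

lemma LRH_hNu (hbd : IsBoundary n (fun i => (mu i : ℤ)) (fun i => (nu i : ℤ))
      (fun i => (lam i : ℤ)) h) :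
    ∀ m, m ≤ n → h m n = LRH_M mu n + ∑ k ∈ Icc 1 m, (nu k : ℤ) := by
  intro m hm
  rcases Nat.eq_zero_or_pos m with rfl | hpos
  · rw [LRH_hM hbd n (le_refl n)]; simp
  · rw [hbd.2.2.1 m hpos hm]; rfl

lemma LRH_hLam (hbd : IsBoundary n (fun i => (mu i : ℤ)) (fun i => (nu i : ℤ))
      (fun i => (lam i : ℤ)) h) :
    ∀ m, m ≤ n → h m m = ∑ k ∈ Icc 1 m, (lam k : ℤ) := by
  intro m hm
  rcases Nat.eq_zero_or_pos m with rfl | hpos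
  · rw [hbd.1]; simp
  · rw [hbd.2.2.2 m hpos hm]

lemma LRH_diag_nonneg (hrc3 : IsRC3 n h)
    (hbd : IsBoundary n (fun i => (mu i : ℤ)) (fun i => (nu i : ℤ))
      (fun i => (lam i : ℤ)) h) :
    ∀ j, 1 ≤ j → j ≤ n → 0 ≤ h j j - h (j-1) j := by
  have key : ∀ k j, j = n - k → 1 ≤ j → j ≤ n → 0 ≤ h j j - h (j-1) j := by
    intro k
    induction k with
    | zero =>
      intro j hj h1 h2
      have hjn : j = n := by omega
      subst hjn
      have e1 := LRH_hNu hbd j (le_refl j)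
      have e2 : h (j-1) j = LRH_M mu j + ∑ k ∈ Icc 1 (j-1), (nu k : ℤ) :=
        LRH_hNu hbd (j-1) (by omega)
      have e3 : (∑ k ∈ Icc 1 j, (nu k : ℤ))
          = (∑ k ∈ Icc 1 (j-1), (nu k : ℤ)) + (nu j : ℤ) := by
        conv_lhs => rw [show j = (j-1)+1 by omega]
        rw [Finset.sum_Icc_succ_top (by omega : 1 ≤ j-1+1), show j-1+1 = j by omega]
      have e4 : (0:ℤ) ≤ (nu j : ℤ) := by positivity
      rw [e1, e2, e3]
      linarith
    | succ k ih =>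
      intro j hj h1 h2
      rcases Nat.lt_or_ge j n with hjn | hjn
      · have e4 := hrc3 j j h1 (le_refl j) hjn
        have e5 := ih (j+1) (by omega) (by omega) (by omega)
        simp only [Nat.add_sub_cancel] at e5
        linarith
      · have hjn' : j = n := by omega
        have e1 := LRH_hNu hbd j (by omega)
        have e2 : h (j-1) j = LRH_M mu j + ∑ k ∈ Icc 1 (j-1), (nu k : ℤ) := by
          subst hjn'; exact LRH_hNu hbd (j-1) (by omega)
        have e3 : (∑ k ∈ Icc 1 j, (nu k : ℤ))
            = (∑ k ∈ Icc 1 (j-1), (nu k : ℤ)) + (nu j : ℤ) := by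
          conv_lhs => rw [show j = (j-1)+1 by omega]
          rw [Finset.sum_Icc_succ_top (by omega : 1 ≤ j-1+1), show j-1+1 = j by omega]
        have e4 : (0:ℤ) ≤ (nu j : ℤ) := by positivity
        subst hjn'
        rw [e1, e2, e3]
        linarith
  intro j h1 h2
  exact key (n - j) j (by omega) h1 h2

lemma LRH_rho_zero (hbd : IsBoundary n (fun i => (mu i : ℤ)) (fun i => (nu i : ℤ))
      (fun i => (lam i : ℤ)) h) :
    ∀ j, 1 ≤ j → j ≤ n → LRH_rho mu h 0 j = 0 := by
  intro j h1 h2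
  rw [LRH_rho, Nat.min_eq_left (by omega), Nat.min_eq_left (by omega),
    LRH_hM hbd j h2, LRH_hM hbd (j-1) (by omega), LRH_M_succ mu h1]
  ring

lemma LRH_rho_top (hbd : IsBoundary n (fun i => (mu i : ℤ)) (fun i => (nu i : ℤ))
      (fun i => (lam i : ℤ)) h) :
    ∀ j, 1 ≤ j → j ≤ n → LRH_rho mu h n j = (lam j : ℤ) - (mu j : ℤ) := by
  intro j h1 h2
  rw [LRH_rho, Nat.min_eq_right h2, Nat.min_eq_right (by omega),
    LRH_hLam hbd j h2, LRH_hLam hbd (j-1) (by omega)]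
  have e3 : (∑ k ∈ Icc 1 j, (lam k : ℤ))
      = (∑ k ∈ Icc 1 (j-1), (lam k : ℤ)) + (lam j : ℤ) := by
    conv_lhs => rw [show j = (j-1)+1 by omega]
    rw [Finset.sum_Icc_succ_top (by omega : 1 ≤ j-1+1), show j-1+1 = j by omega]
  rw [e3]
  ring

lemma LRH_rho_stab (a j : ℕ) (hja : j ≤ a) : LRH_rho mu h a j = LRH_rho mu h j j := by
  rw [LRH_rho, LRH_rho, Nat.min_eq_right hja, Nat.min_eq_right (by omega),
    Nat.min_self, Nat.min_eq_right (by omega)]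

lemma LRH_rho_mono (hrc1 : IsRC1 n h) (hrc3 : IsRC3 n h)
    (hbd : IsBoundary n (fun i => (mu i : ℤ)) (fun i => (nu i : ℤ))
      (fun i => (lam i : ℤ)) h) {j : ℕ} (h1 : 1 ≤ j) (h2 : j ≤ n) :
    ∀ {a a' : ℕ}, a ≤ a' → LRH_rho mu h a j ≤ LRH_rho mu h a' j := by
  have step : ∀ a, LRH_rho mu h a j ≤ LRH_rho mu h (a+1) j := by
    intro a
    rcases Nat.lt_or_ge (a+1) j with hlt | hge
    · have e1 := hrc1 (a+1) j (by omega) hlt h2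
      simp only [Nat.add_sub_cancel] at e1
      rw [LRH_rho, LRH_rho, Nat.min_eq_left (by omega), Nat.min_eq_left (by omega),
        Nat.min_eq_left (by omega), Nat.min_eq_left (by omega)]
      linarith
    · rcases Nat.lt_or_ge a j with hlt2 | hge2
      · have haj : a + 1 = j := by omega
        have e2 := LRH_diag_nonneg hrc3 hbd j h1 h2
        rw [LRH_rho, LRH_rho, haj, Nat.min_eq_left (by omega), Nat.min_eq_left (by omega),
          Nat.min_self, Nat.min_eq_right (by omega)]
        have haj' : a = j - 1 := by omega
        rw [haj']
        linarith
      · rw [LRH_rho_stab a j hge2, LRH_rho_stab (a+1) j (by omega)]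
  intro a a' haa
  induction a' with
  | zero => have : a = 0 := by omega
            subst this; exact le_refl _
  | succ a' ih =>
    rcases Nat.eq_or_lt_of_le haa with rfl | hlt
    · exact le_refl _
    · exact le_trans (ih (by omega)) (step a')

lemma LRH_P_formula (hbd : IsBoundary n (fun i => (mu i : ℤ)) (fun i => (nu i : ℤ))
      (fun i => (lam i : ℤ)) h) (a b : ℕ) :
    (∑ j ∈ Icc 1 b, LRH_rho mu h a j) = h (min a b) b - LRH_M mu b := by
  have e1 : (∑ j ∈ Icc 1 b, LRH_rho mu h a j)
      = (∑ j ∈ Icc 1 b, ((h (min a j) j - h (min a (j-1)) (j-1)) - (mu j : ℤ))) := rfl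
  rw [e1, Finset.sum_sub_distrib, LRH_tele (fun j => h (min a j) j) b]
  simp only [Nat.min_zero]
  rw [hbd.1, LRH_M]
  ring
lemma LRH_rho_ssyt (hrc2 : IsRC2 n h)
    (hbd : IsBoundary n (fun i => (mu i : ℤ)) (fun i => (nu i : ℤ))
      (fun i => (lam i : ℤ)) h)
    (hlam : IsPartition n lam) :
    ∀ a j, 1 ≤ a → 1 ≤ j → j + 1 ≤ n →
      (mu (j+1) : ℤ) + LRH_rho mu h a (j+1) ≤ (mu j : ℤ) + LRH_rho mu h (a-1) j := by
  intro a j ha hj hjn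
  rcases le_or_gt a j with hle | hgt
  · have e1 := hrc2 a j ha hle (by omega)
    simp only [LRH_rho, Nat.add_sub_cancel]
    rw [Nat.min_eq_left (show a ≤ j+1 by omega), Nat.min_eq_left (show a ≤ j by omega),
      Nat.min_eq_left (show a-1 ≤ j by omega), Nat.min_eq_left (show a-1 ≤ j-1 by omega)]
    linarith
  · have e2 : LRH_rho mu h a (j+1) = LRH_rho mu h (j+1) (j+1) := LRH_rho_stab _ _ (by omega)
    have e3 : LRH_rho mu h (a-1) j = LRH_rho mu h j j := LRH_rho_stab _ _ (by omega)
    rw [e2, e3]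
    simp only [LRH_rho, Nat.add_sub_cancel]
    rw [Nat.min_self, Nat.min_eq_right (show j ≤ j+1 by omega), Nat.min_self,
      Nat.min_eq_right (show j-1 ≤ j by omega)]
    have e4 := LRH_hLam hbd (j+1) hjn
    have e5 := LRH_hLam hbd j (by omega)
    have e6 := LRH_hLam hbd (j-1) (by omega)
    have e7 : (∑ k ∈ Icc 1 (j+1), (lam k : ℤ)) = (∑ k ∈ Icc 1 j, (lam k : ℤ)) + (lam (j+1) : ℤ) :=
      Finset.sum_Icc_succ_top (by omega : 1 ≤ j+1) _
    have e8 : (∑ k ∈ Icc 1 j, (lam k : ℤ)) = (∑ k ∈ Icc 1 (j-1), (lam k : ℤ)) + (lam j : ℤ) := by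
      conv_lhs => rw [show j = (j-1)+1 by omega]
      rw [Finset.sum_Icc_succ_top (by omega : 1 ≤ j-1+1), show j-1+1 = j by omega]
    have e9 : (lam (j+1) : ℤ) ≤ (lam j : ℤ) := by exact_mod_cast hlam.1 j hj
    linarith

lemma LRH_rho_strong (hrc3 : IsRC3 n h)
    (hbd : IsBoundary n (fun i => (mu i : ℤ)) (fun i => (nu i : ℤ))
      (fun i => (lam i : ℤ)) h) :
    ∀ a b, 1 ≤ a → b + 1 ≤ n →
      (∑ j ∈ Icc 1 (b+1), (LRH_rho mu h (a+1) j - LRH_rho mu h a j))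
        ≤ ∑ j ∈ Icc 1 b, (LRH_rho mu h a j - LRH_rho mu h (a-1) j) := by
  intro a b ha hbn
  rw [Finset.sum_sub_distrib, Finset.sum_sub_distrib,
    LRH_P_formula hbd (a+1) (b+1), LRH_P_formula hbd a (b+1),
    LRH_P_formula hbd a b, LRH_P_formula hbd (a-1) b]
  rcases Nat.eq_zero_or_pos b with rfl | hb
  · rw [Nat.min_eq_right (show 1 ≤ a+1 by omega), Nat.min_eq_right (show 1 ≤ a by omega)]
    simp
  · rcases le_or_gt a b with hab | hab
    · rw [Nat.min_eq_left (show a+1 ≤ b+1 by omega), Nat.min_eq_left (show a ≤ b+1 by omega),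
        Nat.min_eq_left hab, Nat.min_eq_left (show a-1 ≤ b by omega)]
      have e1 := hrc3 a b ha hab (by omega)
      linarith
    · rw [Nat.min_eq_right (show b+1 ≤ a+1 by omega), Nat.min_eq_right (show b+1 ≤ a by omega),
        Nat.min_eq_right (show b ≤ a by omega), Nat.min_eq_right (show b ≤ a-1 by omega)]
      have e2 := LRH_diag_nonneg hrc3 hbd b hb (by omega)
      linarith

lemma LRH_bwd_cell (hrc1 : IsRC1 n h) (hrc3 : IsRC3 n h)
    (hbd : IsBoundary n (fun i => (mu i : ℤ)) (fun i => (nu i : ℤ))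
      (fun i => (lam i : ℤ)) h)
    {j col : ℕ} (h1 : 1 ≤ j) (h2 : j ≤ n) (h3 : mu j < col) (h4 : col ≤ lam j) :
    1 ≤ LRH_bwd n mu lam h j col ∧ LRH_bwd n mu lam h j col ≤ n ∧
    ∀ a, (LRH_bwd n mu lam h j col ≤ a ↔ (col : ℤ) ≤ (mu j : ℤ) + LRH_rho mu h a j) := by
  set S := {a : ℕ | (col : ℤ) ≤ (mu j : ℤ) + LRH_rho mu h a j} with hSdef
  have hS : LRH_bwd n mu lam h j col = sInf S := by
    rw [LRH_bwd, if_pos ⟨h1, h2, h3, h4⟩]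
  have hn : n ∈ S := by
    rw [hSdef, Set.mem_setOf_eq, LRH_rho_top hbd j h1 h2]
    have : (col : ℤ) ≤ (lam j : ℤ) := by exact_mod_cast h4
    linarith
  have hne : S.Nonempty := ⟨n, hn⟩
  have hmem : sInf S ∈ S := Nat.sInf_mem hne
  have h0 : 0 ∉ S := by
    rw [hSdef, Set.mem_setOf_eq, LRH_rho_zero hbd j h1 h2]
    omega
  have hpos : 1 ≤ sInf S := by
    rcases Nat.eq_zero_or_pos (sInf S) with he | hp
    · exact absurd (he ▸ hmem) h0
    · exact hp
  refine ⟨hS ▸ hpos, hS ▸ Nat.sInf_le hn, ?_⟩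
  intro a
  rw [hS]
  constructor
  · intro hle
    have hm := hmem
    rw [hSdef, Set.mem_setOf_eq] at hm
    have := LRH_rho_mono hrc1 hrc3 hbd h1 h2 hle
    linarith
  · intro hcol
    exact Nat.sInf_le hcol
lemma LRH_rho_nonneg (hrc1 : IsRC1 n h) (hrc3 : IsRC3 n h)
    (hbd : IsBoundary n (fun i => (mu i : ℤ)) (fun i => (nu i : ℤ))
      (fun i => (lam i : ℤ)) h)
    {j : ℕ} (h1 : 1 ≤ j) (h2 : j ≤ n) (a : ℕ) : 0 ≤ LRH_rho mu h a j := by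
  have h5 := LRH_rho_mono hrc1 hrc3 hbd h1 h2 (Nat.zero_le a)
  rw [LRH_rho_zero hbd j h1 h2] at h5
  exact h5

lemma LRH_rho_le (hrc1 : IsRC1 n h) (hrc3 : IsRC3 n h)
    (hbd : IsBoundary n (fun i => (mu i : ℤ)) (fun i => (nu i : ℤ))
      (fun i => (lam i : ℤ)) h)
    {j : ℕ} (h1 : 1 ≤ j) (h2 : j ≤ n) (a : ℕ) :
    LRH_rho mu h a j ≤ (lam j : ℤ) - (mu j : ℤ) := by
  rcases le_or_gt a n with han | han
  · have h5 := LRH_rho_mono hrc1 hrc3 hbd h1 h2 han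
    rw [LRH_rho_top hbd j h1 h2] at h5
    exact h5
  · rw [LRH_rho_stab a j (by omega), ← LRH_rho_stab n j h2, LRH_rho_top hbd j h1 h2]

lemma LRH_bwd_cnt (hrc1 : IsRC1 n h) (hrc3 : IsRC3 n h)
    (hbd : IsBoundary n (fun i => (mu i : ℤ)) (fun i => (nu i : ℤ))
      (fun i => (lam i : ℤ)) h)
    {i j : ℕ} (hi : 1 ≤ i) (hj : 1 ≤ j) (hjn : j ≤ n) :
    (cnt mu lam (LRH_bwd n mu lam h) i j : ℤ)
      = LRH_rho mu h i j - LRH_rho mu h (i-1) j := by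
  have hcard : ∀ a, ((Finset.Icc (mu j+1) (lam j)).filter
      (fun c => LRH_bwd n mu lam h j c ≤ a)).card = (LRH_rho mu h a j).toNat := by
    intro a
    have hnn := LRH_rho_nonneg hrc1 hrc3 hbd hj hjn a
    have hub := LRH_rho_le hrc1 hrc3 hbd hj hjn a
    have hA : (Finset.Icc (mu j+1) (lam j)).filter (fun c => LRH_bwd n mu lam h j c ≤ a)
        = Finset.Icc (mu j + 1) (mu j + (LRH_rho mu h a j).toNat) := by
      ext c
      simp only [Finset.mem_filter, Finset.mem_Icc]
      constructor
      · rintro ⟨⟨hc1, hc2⟩, hc3⟩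
        have hiff := (LRH_bwd_cell hrc1 hrc3 hbd hj hjn (by omega) hc2).2.2 a
        have h5 := hiff.mp hc3
        omega
      · rintro ⟨hc1, hc2⟩
        have hc2' : c ≤ lam j := by omega
        have hiff := (LRH_bwd_cell hrc1 hrc3 hbd hj hjn (by omega) hc2').2.2 a
        exact ⟨⟨hc1, hc2'⟩, hiff.mpr (by omega)⟩
    rw [hA, Nat.card_Icc]
    omega
  have hsplit : (Finset.Icc (mu j+1) (lam j)).filter (fun c => LRH_bwd n mu lam h j c ≤ i)
      = ((Finset.Icc (mu j+1) (lam j)).filter (fun c => LRH_bwd n mu lam h j c ≤ i-1))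
        ∪ ((Finset.Icc (mu j+1) (lam j)).filter (fun c => LRH_bwd n mu lam h j c = i)) := by
    rw [← Finset.filter_or]
    apply Finset.filter_congr
    intro c _
    constructor
    · intro h5; omega
    · intro h5; omega
  have hdisj : Disjoint
      ((Finset.Icc (mu j+1) (lam j)).filter (fun c => LRH_bwd n mu lam h j c ≤ i-1))
      ((Finset.Icc (mu j+1) (lam j)).filter (fun c => LRH_bwd n mu lam h j c = i)) := by
    rw [Finset.disjoint_left]
    intro c hc1 hc2
    simp only [Finset.mem_filter] at hc1 hc2
    omega
  have e3 : (LRH_rho mu h i j).toNat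
      = (LRH_rho mu h (i-1) j).toNat + cnt mu lam (LRH_bwd n mu lam h) i j := by
    rw [← hcard i, hsplit, Finset.card_union_of_disjoint hdisj, hcard (i-1)]
    rfl
  have hnn1 := LRH_rho_nonneg hrc1 hrc3 hbd hj hjn i
  have hnn2 := LRH_rho_nonneg hrc1 hrc3 hbd hj hjn (i-1)
  omega

lemma LRH_bwd_mem (hrc1 : IsRC1 n h) (hrc2 : IsRC2 n h) (hrc3 : IsRC3 n h)
    (hbd : IsBoundary n (fun i => (mu i : ℤ)) (fun i => (nu i : ℤ))
      (fun i => (lam i : ℤ)) h)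
    (hlam : IsPartition n lam) :
    IsLR n mu lam nu (LRH_bwd n mu lam h) ∧ NormFilling n mu lam (LRH_bwd n mu lam h) := by
  have hstrongN : ∀ a b, 1 ≤ a → b + 1 ≤ n →
      (∑ j ∈ Icc 1 (b+1), cnt mu lam (LRH_bwd n mu lam h) (a+1) j)
        ≤ ∑ j ∈ Icc 1 b, cnt mu lam (LRH_bwd n mu lam h) a j := by
    intro a b ha hb
    have hz := LRH_rho_strong hrc3 hbd a b ha hb
    have e1 : ((∑ j ∈ Icc 1 (b+1), cnt mu lam (LRH_bwd n mu lam h) (a+1) j : ℕ) : ℤ)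
        = ∑ j ∈ Icc 1 (b+1), (LRH_rho mu h (a+1) j - LRH_rho mu h a j) := by
      rw [Nat.cast_sum]
      apply Finset.sum_congr rfl
      intro j hj
      rw [Finset.mem_Icc] at hj
      rw [LRH_bwd_cnt hrc1 hrc3 hbd (by omega) (by omega) (by omega)]
      simp only [Nat.add_sub_cancel]
    have e2 : ((∑ j ∈ Icc 1 b, cnt mu lam (LRH_bwd n mu lam h) a j : ℕ) : ℤ)
        = ∑ j ∈ Icc 1 b, (LRH_rho mu h a j - LRH_rho mu h (a-1) j) := by
      rw [Nat.cast_sum]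
      apply Finset.sum_congr rfl
      intro j hj
      rw [Finset.mem_Icc] at hj
      rw [LRH_bwd_cnt hrc1 hrc3 hbd (by omega) (by omega) (by omega)]
    rw [← e1, ← e2] at hz
    exact_mod_cast hz
  refine ⟨⟨?_, ?_, ?_, ?_, ?_⟩, ?_⟩
  · -- RowWeak
    intro j c c' h1 h2 h3 h4 h5
    have hcell' := LRH_bwd_cell hrc1 hrc3 hbd h1 h2 (by omega) h5
    have hcell := LRH_bwd_cell hrc1 hrc3 hbd h1 h2 h3 (by omega)
    have h6 := (hcell'.2.2 (LRH_bwd n mu lam h j c')).mp (le_refl _)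
    apply (hcell.2.2 (LRH_bwd n mu lam h j c')).mpr
    have : (c : ℤ) ≤ (c' : ℤ) := by exact_mod_cast h4
    linarith
  · -- ColStrict
    intro j c h1 h2 h3 h4 h5 h6
    have hcell' := LRH_bwd_cell hrc1 hrc3 hbd (by omega : 1 ≤ j+1) h2 h5 h6
    have hcell := LRH_bwd_cell hrc1 hrc3 hbd h1 (by omega) h3 h4
    have ha1 := hcell'.1
    have h7 := (hcell'.2.2 (LRH_bwd n mu lam h (j+1) c)).mp (le_refl _)
    have h8 := LRH_rho_ssyt hrc2 hbd hlam (LRH_bwd n mu lam h (j+1) c) j ha1 h1 h2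
    have h9 : LRH_bwd n mu lam h j c ≤ LRH_bwd n mu lam h (j+1) c - 1 := by
      apply (hcell.2.2 _).mpr
      linarith
    omega
  · -- EntriesIn
    intro j c h1 h2 h3 h4
    have hcell := LRH_bwd_cell hrc1 hrc3 hbd h1 h2 h3 h4
    exact ⟨hcell.1, hcell.2.1⟩
  · -- Yamanouchi
    exact LRH_strong_yam n mu lam (LRH_bwd n mu lam h) hstrongN
  · -- HasContent
    intro k hk1 hk2
    have e1 : ((∑ j ∈ Icc 1 n, cnt mu lam (LRH_bwd n mu lam h) k j : ℕ) : ℤ)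
        = ∑ j ∈ Icc 1 n, (LRH_rho mu h k j - LRH_rho mu h (k-1) j) := by
      rw [Nat.cast_sum]
      apply Finset.sum_congr rfl
      intro j hj
      rw [Finset.mem_Icc] at hj
      rw [LRH_bwd_cnt hrc1 hrc3 hbd hk1 (by omega) (by omega)]
    have e2 : (∑ j ∈ Icc 1 n, (LRH_rho mu h k j - LRH_rho mu h (k-1) j)) = (nu k : ℤ) := by
      rw [Finset.sum_sub_distrib, LRH_P_formula hbd k n, LRH_P_formula hbd (k-1) n,
        Nat.min_eq_left hk2, Nat.min_eq_left (by omega),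
        LRH_hNu hbd k hk2, LRH_hNu hbd (k-1) (by omega)]
      have e3 : (∑ x ∈ Icc 1 k, (nu x : ℤ))
          = (∑ x ∈ Icc 1 (k-1), (nu x : ℤ)) + (nu k : ℤ) := by
        conv_lhs => rw [show k = (k-1)+1 by omega]
        rw [Finset.sum_Icc_succ_top (by omega : 1 ≤ k-1+1), show k-1+1 = k by omega]
      rw [e3]
      ring
    have := e1.trans e2
    exact_mod_cast this
  · -- NormFilling
    intro j c hnc
    rw [LRH_bwd, if_neg hnc]
end LRHbwd

/-! ### Round trips -/

lemma LRH_left_inv (n : ℕ) (lam mu nu : ℕ → ℕ)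
    (Y : ℕ → ℕ → ℕ) (hY : IsLR n mu lam nu Y) (hnormY : NormFilling n mu lam Y) :
    LRH_bwd n mu lam (LRH_fwd n mu lam Y) = Y := by
  obtain ⟨hrow, hcol, hent, hyam, hcont⟩ := hY
  have hstrong := LRH_yam_strong n mu lam Y hrow hyam
  funext j col
  by_cases hc : 1 ≤ j ∧ j ≤ n ∧ mu j < col ∧ col ≤ lam j
  case neg => rw [LRH_bwd, if_neg hc, hnormY j col hc]
  obtain ⟨h1, h2, h3, h4⟩ := hc
  -- the rho array of the forward hive is given by the cumulative row counts
  have hrho : ∀ a, LRH_rho mu (LRH_fwd n mu lam Y) a j = (LRH_rcard mu lam Y a j : ℤ) := by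
    intro a
    have hfwd_in : ∀ x y, x ≤ y → y ≤ n →
        LRH_fwd n mu lam Y x y = LRH_M mu y + LRH_N mu lam Y x y := by
      intro x y hx hy; rw [LRH_fwd, if_pos ⟨hx, hy⟩]
    rcases Nat.lt_or_ge a j with haj | haj
    · -- a < j
      rw [LRH_rho, Nat.min_eq_left (by omega), Nat.min_eq_left (by omega),
        hfwd_in a j (by omega) h2, hfwd_in a (j-1) (by omega) (by omega),
        LRH_M_succ mu h1, LRH_N_succ_b mu lam Y h1, ← Nat.cast_sum, LRH_R_eq_rcard]
      ring
    · -- j ≤ a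
      rw [LRH_rho, Nat.min_eq_right haj, Nat.min_eq_right (by omega),
        hfwd_in j j (le_refl _) h2, hfwd_in (j-1) (j-1) (le_refl _) (by omega),
        LRH_M_succ mu h1]
      have e1 : LRH_N mu lam Y j j
          = LRH_N mu lam Y (j-1) j + ∑ j' ∈ Icc 1 j, (cnt mu lam Y j j' : ℤ) :=
        LRH_N_succ_a mu lam Y j h1
      have e2 : LRH_N mu lam Y (j-1) j
          = LRH_N mu lam Y (j-1) (j-1) + ∑ i ∈ Icc 1 (j-1), (cnt mu lam Y i j : ℤ) :=
        LRH_N_succ_b mu lam Y h1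
      have e3 : (∑ j' ∈ Icc 1 j, (cnt mu lam Y j j' : ℤ)) = (cnt mu lam Y j j : ℤ) := by
        conv_lhs => rw [show j = (j-1)+1 by omega]
        rw [Finset.sum_Icc_succ_top (by omega : 1 ≤ j-1+1), show j-1+1 = j by omega]
        have e4 : (∑ j' ∈ Icc 1 (j-1), (cnt mu lam Y j j' : ℤ)) = 0 := by
          apply Finset.sum_eq_zero
          intro j' hj'
          rw [Finset.mem_Icc] at hj'
          rw [LRH_cnt_zero n mu lam Y hstrong (by omega) (by omega) (by omega)]
          rfl
        rw [e4, zero_add]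
      have e5 : (∑ i ∈ Icc 1 (j-1), (cnt mu lam Y i j : ℤ)) + (cnt mu lam Y j j : ℤ)
          = (LRH_rcard mu lam Y j j : ℤ) := by
        rw [← LRH_R_eq_rcard, ← Nat.cast_sum, ← Nat.cast_add]
        congr 1
        conv_rhs => rw [show j = (j-1)+1 by omega]
        rw [Finset.sum_Icc_succ_top (by omega : 1 ≤ j-1+1), show j-1+1 = j by omega]
      have e6 : LRH_rcard mu lam Y a j = LRH_rcard mu lam Y j j := by
        rw [← LRH_R_eq_rcard, ← LRH_R_eq_rcard]
        symm
        apply Finset.sum_subset (Finset.Icc_subset_Icc_right haj)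
        intro x hx hxn
        rw [Finset.mem_Icc] at hx hxn
        exact LRH_cnt_zero n mu lam Y hstrong (by omega) h1 h2
      rw [e6, ← e5, e1, e2, e3]
      ring
  rw [LRH_bwd, if_pos ⟨h1, h2, h3, h4⟩]
  have hv1 : 1 ≤ Y j col := (hent j col h1 h2 h3 h4).1
  -- col - mu j ≤ rcard (Y j col) j
  have hin : col ≤ mu j + LRH_rcard mu lam Y (Y j col) j := by
    have hsub1 : Finset.Icc (mu j + 1) col
        ⊆ (Finset.Icc (mu j + 1) (lam j)).filter
            (fun c => 1 ≤ Y j c ∧ Y j c ≤ Y j col) := by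
      intro c' hc'
      rw [Finset.mem_Icc] at hc'
      rw [Finset.mem_filter, Finset.mem_Icc]
      have h5 := hrow j c' col h1 h2 (by omega) hc'.2 h4
      have h6 := hent j c' h1 h2 (by omega) (by omega)
      exact ⟨⟨hc'.1, by omega⟩, h6.1, h5⟩
    have h7 := Finset.card_le_card hsub1
    rw [Nat.card_Icc] at h7
    have h8 : ((Finset.Icc (mu j + 1) (lam j)).filter
        (fun c => 1 ≤ Y j c ∧ Y j c ≤ Y j col)).card = LRH_rcard mu lam Y (Y j col) j := rfl
    omega
  have hout : mu j + LRH_rcard mu lam Y (Y j col - 1) j < col := by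
    have hsub2 : (Finset.Icc (mu j + 1) (lam j)).filter
        (fun c => 1 ≤ Y j c ∧ Y j c ≤ Y j col - 1) ⊆ Finset.Icc (mu j + 1) (col - 1) := by
      intro c' hc'
      rw [Finset.mem_filter, Finset.mem_Icc] at hc'
      rw [Finset.mem_Icc]
      refine ⟨hc'.1.1, ?_⟩
      by_contra hge
      have h9 := hrow j col c' h1 h2 h3 (by omega) hc'.1.2
      omega
    have h7 := Finset.card_le_card hsub2
    rw [Nat.card_Icc] at h7
    have h8 : ((Finset.Icc (mu j + 1) (lam j)).filter
        (fun c => 1 ≤ Y j c ∧ Y j c ≤ Y j col - 1)).card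
          = LRH_rcard mu lam Y (Y j col - 1) j := rfl
    omega
  have hvS : Y j col ∈ {a : ℕ | (col : ℤ) ≤ (mu j : ℤ) + LRH_rho mu (LRH_fwd n mu lam Y) a j} := by
    rw [Set.mem_setOf_eq, hrho]
    exact_mod_cast hin
  apply le_antisymm (Nat.sInf_le hvS)
  by_contra hlt
  push_neg at hlt
  have hmem := Nat.sInf_mem (⟨Y j col, hvS⟩ :
    Set.Nonempty {a : ℕ | (col : ℤ) ≤ (mu j : ℤ) + LRH_rho mu (LRH_fwd n mu lam Y) a j})
  rw [Set.mem_setOf_eq, hrho] at hmem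
  have hmono := LRH_rcard_mono mu lam Y j
    (show sInf {a : ℕ | (col : ℤ) ≤ (mu j : ℤ) + LRH_rho mu (LRH_fwd n mu lam Y) a j}
      ≤ Y j col - 1 by omega)
  have : (col : ℤ) ≤ (mu j : ℤ) + (LRH_rcard mu lam Y (Y j col - 1) j : ℤ) := by
    have := hmono
    omega
  push_cast at this
  omega

lemma LRH_right_inv (n : ℕ) (lam mu nu : ℕ → ℕ) (h : ℕ → ℕ → ℤ)
    (hrc1 : IsRC1 n h) (hrc3 : IsRC3 n h)
    (hbd : IsBoundary n (fun i => (mu i : ℤ)) (fun i => (nu i : ℤ))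
      (fun i => (lam i : ℤ)) h)
    (hnorm : ∀ a b, ¬(a ≤ b ∧ b ≤ n) → h a b = 0) :
    LRH_fwd n mu lam (LRH_bwd n mu lam h) = h := by
  funext a b
  by_cases hab : a ≤ b ∧ b ≤ n
  case neg => rw [LRH_fwd, if_neg hab, hnorm a b hab]
  obtain ⟨h1, h2⟩ := hab
  rw [LRH_fwd, if_pos ⟨h1, h2⟩]
  have hN : LRH_N mu lam (LRH_bwd n mu lam h) a b = ∑ j ∈ Icc 1 b, LRH_rho mu h a j := by
    rw [LRH_N]
    apply Finset.sum_congr rfl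
    intro j hj
    rw [Finset.mem_Icc] at hj
    have e1 : (∑ i ∈ Icc 1 a, (cnt mu lam (LRH_bwd n mu lam h) i j : ℤ))
        = ∑ i ∈ Icc 1 a, (LRH_rho mu h i j - LRH_rho mu h (i-1) j) := by
      apply Finset.sum_congr rfl
      intro i hi
      rw [Finset.mem_Icc] at hi
      exact LRH_bwd_cnt hrc1 hrc3 hbd hi.1 (by omega) (by omega)
    rw [e1, LRH_tele (fun i => LRH_rho mu h i j) a, LRH_rho_zero hbd j (by omega) (by omega)]
    ring
  rw [hN, LRH_P_formula hbd a b, Nat.min_eq_left h1]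
  ring

/-- Corollary 4.6 / 5.4: there is a bijection between the LR tableaux
`LR(λ/μ, ν)` and the hives `H°(μ,ν,λ)` with boundary determined by `μ, ν, λ`. -/
theorem lr_hive_bijection (n : ℕ) (lam mu nu : ℕ → ℕ)
    (hlam : IsPartition n lam) (hmu : IsPartition n mu)
    (hnu : IsPartition n nu) (hsub : ∀ j, mu j ≤ lam j) :
    Nonempty
      ({Y : ℕ → ℕ → ℕ // IsLR n mu lam nu Y ∧ NormFilling n mu lam Y} ≃
        {h : ℕ → ℕ → ℤ // IsRC1 n h ∧ IsRC2 n h ∧ IsRC3 n h ∧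
          IsBoundary n (fun i => (mu i : ℤ)) (fun i => (nu i : ℤ))
            (fun i => (lam i : ℤ)) h ∧
          ∀ a b, ¬(a ≤ b ∧ b ≤ n) → h a b = 0}) := by
  refine ⟨{
    toFun := fun Y => ⟨LRH_fwd n mu lam Y.1,
      LRH_fwd_mem n lam mu nu hlam hmu hsub Y.1 Y.2.1⟩
    invFun := fun hh => ⟨LRH_bwd n mu lam hh.1,
      LRH_bwd_mem hh.2.1 hh.2.2.1 hh.2.2.2.1 hh.2.2.2.2.1 hlam⟩
    left_inv := ?_
    right_inv := ?_ }⟩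
  · intro Y
    exact Subtype.ext (LRH_left_inv n lam mu nu Y.1 Y.2.1 Y.2.2)
  · intro hh
    exact Subtype.ext (LRH_right_inv n lam mu nu hh.1 hh.2.1 hh.2.2.2.1
      hh.2.2.2.2.1 hh.2.2.2.2.2)
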